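/- Let t ↦ M(t) be a C¹ family of invertible n×n real matrices on [0, ∞) with M(0) = Id, satisfying M'(t) = W(t)·M(t) where each W(t) is symmetric positive semidefinite. Then for all t ≥ 0, the matrix M(t)ᵀ M(t) − Id is positive semidefinite; in particular the map x ↦ M(t) x is an expansion. -/

import Mathlib

open Matrix Set

/-- If M(t) is a C¹ family of matrices on [0,∞) with M(0) = Id and
M'(t) = W(t)·M(t) for W(t) symmetric positive semidefinite (W continuous), then
M(t)ᵀ M(t) − Id is positive semidefinite for all t ≥ 0; in particular x ↦ M(t) x
is an expansion. -/
theorem stmt_6 {n : ℕ} (M W : ℝ → Matrix (Fin n) (Fin n) ℝ)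
    (hWcont : ∀ i j, ContinuousOn (fun t => W t i j) (Ici 0))
    (hWsymm : ∀ t ∈ Ici (0:ℝ), (W t).IsSymm)
    (hWpsd : ∀ t ∈ Ici (0:ℝ), (W t).PosSemidef)
    (hM0 : M 0 = 1)
    (hMinv : ∀ t ∈ Ici (0:ℝ), IsUnit (M t))
    (hderiv : ∀ t ∈ Ici (0:ℝ), ∀ i j,
      HasDerivWithinAt (fun s => M s i j) ((W t * M t) i j) (Ici 0) t) :
    ∀ t ∈ Ici (0:ℝ), ((M t)ᵀ * M t - 1).PosSemidef ∧
      ∀ x : EuclideanSpace ℝ (Fin n), ‖x‖ ≤ ‖(M t).toEuclideanLin x‖ := by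
  intro t ht
  have key : ∀ x : Fin n → ℝ, x ⬝ᵥ x ≤ (M t *ᵥ x) ⬝ᵥ (M t *ᵥ x) := by
    intro x
    set f : ℝ → ℝ := fun s => (M s *ᵥ x) ⬝ᵥ (M s *ᵥ x) with hf
    have hv : ∀ s ∈ Ici (0:ℝ), ∀ i, HasDerivWithinAt (fun u => (M u *ᵥ x) i)
        (((W s * M s) *ᵥ x) i) (Ici 0) s := by
      intro s hs i
      simpa [mulVec, dotProduct] using
        HasDerivWithinAt.fun_sum (fun j _ => (hderiv s hs i j).mul_const (x j))
    have hd : ∀ s ∈ Ici (0:ℝ), HasDerivWithinAt f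
        (∑ i, (((W s * M s) *ᵥ x) i * (M s *ᵥ x) i + (M s *ᵥ x) i * ((W s * M s) *ᵥ x) i))
        (Ici 0) s := by
      intro s hs
      simpa [hf, dotProduct] using
        HasDerivWithinAt.fun_sum (fun i _ => (hv s hs i).mul (hv s hs i))
    have hd' : ∀ s ∈ Ici (0:ℝ), HasDerivWithinAt f
        (2 * ((M s *ᵥ x) ⬝ᵥ (W s *ᵥ (M s *ᵥ x)))) (Ici 0) s := by
      intro s hs
      have := hd s hs
      have e : (∑ i, (((W s * M s) *ᵥ x) i * (M s *ᵥ x) i + (M s *ᵥ x) i * ((W s * M s) *ᵥ x) i))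
          = 2 * ((M s *ᵥ x) ⬝ᵥ (W s *ᵥ (M s *ᵥ x))) := by
        simp [dotProduct, ← mulVec_mulVec, Finset.sum_add_distrib, mul_comm, two_mul]
      rwa [e] at this
    have hmono : MonotoneOn f (Ici 0) := by
      apply monotoneOn_of_deriv_nonneg (convex_Ici 0)
      · exact fun s hs => (hd' s hs).continuousWithinAt
      · intro s hs
        rw [interior_Ici] at hs
        exact ((hd' s (mem_Ici.mpr (le_of_lt hs))).hasDerivAt (Ici_mem_nhds hs)).differentiableAt.differentiableWithinAt
      · intro s hs
        rw [interior_Ici] at hs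
        rw [((hd' s (mem_Ici.mpr (le_of_lt hs))).hasDerivAt (Ici_mem_nhds hs)).deriv]
        have := (posSemidef_iff_dotProduct_mulVec.mp (hWpsd s (mem_Ici.mpr (le_of_lt hs)))).2 (M s *ᵥ x)
        simp only [star_trivial] at this
        positivity
    have := hmono self_mem_Ici ht ht
    simpa [hf, hM0] using this
  constructor
  · refine .of_dotProduct_mulVec_nonneg (((by simpa using isHermitian_conjTranspose_mul_self (M t)) : ((M t)ᵀ * M t).IsHermitian).sub isHermitian_one) fun x => ?_
    rw [star_trivial, sub_mulVec, dotProduct_sub, one_mulVec, ← mulVec_mulVec,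
      dotProduct_mulVec, vecMul_transpose, sub_nonneg]
    exact key x
  · intro x
    have h2 : ‖x‖^2 ≤ ‖(M t).toEuclideanLin x‖^2 := by
      rw [← real_inner_self_eq_norm_sq, ← real_inner_self_eq_norm_sq]
      have := key ((WithLp.equiv 2 (Fin n → ℝ)) x)
      rw [PiLp.inner_apply, PiLp.inner_apply]
      simpa [toEuclideanLin_apply, PiLp.inner_apply, dotProduct, mul_comm, sq] using this
    nlinarith [norm_nonneg x, norm_nonneg ((M t).toEuclideanLin x)]
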